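/- Let n ≥ 1, λ > 1, 0 < α < (n+2)/2·(1−1/λ), and T > 0. Then β := (n+2)/2 − λα/(λ−1) is positive, and the function f(x,t) := A·Φ_β(x, t+T)·χ_{[0,∞)}(t), where A := ((4π)^{(λ−1)n/2}·Γ(α+β)^λ / Γ(β))^{1/(λ−1)}, satisfies: f ∈ X^p for every p ∈ [1,∞), f ≥ (J_α f)^λ everywhere on ℝ^n×ℝ, f = 0 on ℝ^n×(−∞,0), and f is not zero a.e. -/

import Mathlib

open MeasureTheory Real Set
open scoped ENNReal

/-- The fractional heat kernel `Φ_α(x,t)`. -/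
noncomputable def Phi (n : ℕ) (α : ℝ) (x : EuclideanSpace ℝ (Fin n)) (t : ℝ) : ℝ :=
  if 0 < t then
    (t ^ (α - 1) / Real.Gamma α) * (4 * Real.pi * t) ^ (-(n : ℝ) / 2) *
      Real.exp (-‖x‖ ^ 2 / (4 * t))
  else 0

/-- `J_α f (x,t) = ∫_{-∞}^t ∫_{ℝ^n} Φ_α(x-ξ,t-τ) f(ξ,τ) dξ dτ`, as a value in `[0,∞]`. -/
noncomputable def J (n : ℕ) (α : ℝ) (f : EuclideanSpace ℝ (Fin n) → ℝ → ℝ)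
    (x : EuclideanSpace ℝ (Fin n)) (t : ℝ) : ℝ≥0∞ :=
  ∫⁻ τ in Set.Iio t, ∫⁻ ξ, ENNReal.ofReal (Phi n α (x - ξ) (t - τ) * f ξ τ)

/-- Membership in `X^p`: measurable with finite `L^p` norm on `ℝ^n × (-∞,T)` for all `T`. -/
def MemXp (n : ℕ) (p : ℝ≥0∞) (f : EuclideanSpace ℝ (Fin n) → ℝ → ℝ) : Prop :=
  Measurable (Function.uncurry f) ∧
  ∀ T : ℝ, eLpNorm (Function.uncurry f) p
    (volume.restrict {q : EuclideanSpace ℝ (Fin n) × ℝ | q.2 < T}) < ⊤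

/-! ### Auxiliary lemmas -/

-- real Beta integral: interval integrability
lemma betaII {a b S : ℝ} (ha : 0 < a) (hb : 0 < b) (hS : 0 < S) :
    IntervalIntegrable (fun σ => σ ^ (a - 1) * (S - σ) ^ (b - 1)) volume 0 S := by
  have h1 : IntervalIntegrable (fun σ => σ ^ (a - 1) * (S - σ) ^ (b - 1)) volume 0 (S/2) := by
    apply (intervalIntegral.intervalIntegrable_rpow' (by linarith)).mul_continuousOn
    apply ContinuousOn.rpow_const (by fun_prop)
    intro x hx
    rw [uIcc_of_le (by linarith)] at hx
    exact Or.inl (by intro h; nlinarith [hx.2])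
  have hbase : IntervalIntegrable (fun σ => (S - σ) ^ (b - 1)) volume (S/2) S := by
    have h := (intervalIntegral.intervalIntegrable_rpow' (r := b - 1) (a := 0) (b := S/2)
      (by linarith)).comp_sub_left S
    have e : S - S/2 = S/2 := by ring
    simpa [e] using h.symm
  have h2 : IntervalIntegrable (fun σ => σ ^ (a - 1) * (S - σ) ^ (b - 1)) volume (S/2) S := by
    have h := hbase.mul_continuousOn (g := fun σ => σ ^ (a - 1))
      (by
        apply ContinuousOn.rpow_const (by fun_prop)
        intro x hx
        rw [uIcc_of_le (by linarith)] at hx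
        exact Or.inl (by intro h; nlinarith [hx.1]))
    simpa [mul_comm] using h
  exact h1.trans h2

-- real Beta integral: value
lemma betaVal {a b S : ℝ} (ha : 0 < a) (hb : 0 < b) (hS : 0 < S) :
    ∫ σ in (0:ℝ)..S, σ ^ (a - 1) * (S - σ) ^ (b - 1)
      = S ^ (a + b - 1) * (Real.Gamma a * Real.Gamma b / Real.Gamma (a + b)) := by
  have hc := Complex.betaIntegral_scaled (a : ℂ) (b : ℂ) hS
  have hcongr : ∀ x ∈ uIcc (0:ℝ) S,
      (x:ℂ) ^ ((a:ℂ) - 1) * ((S:ℂ) - x) ^ ((b:ℂ) - 1)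
        = ((x ^ (a-1) * (S - x) ^ (b-1) : ℝ) : ℂ) := by
    intro x hx
    rw [uIcc_of_le hS.le] at hx
    rw [show ((a:ℂ) - 1) = ((a - 1 : ℝ) : ℂ) by push_cast; ring,
      show ((b:ℂ) - 1) = ((b - 1 : ℝ) : ℂ) by push_cast; ring,
      show ((S:ℂ) - x) = ((S - x : ℝ) : ℂ) by push_cast; ring,
      ← Complex.ofReal_cpow hx.1, ← Complex.ofReal_cpow (by linarith [hx.2]),
      ← Complex.ofReal_mul]
  rw [intervalIntegral.integral_congr hcongr, intervalIntegral.integral_ofReal] at hc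
  have hG : Complex.Gamma ((a:ℂ) + b) ≠ 0 := by
    rw [show ((a:ℂ) + b) = ((a + b : ℝ) : ℂ) by push_cast; ring, Complex.Gamma_ofReal]
    exact_mod_cast (Real.Gamma_pos_of_pos (by linarith)).ne'
  have hbeta : Complex.betaIntegral (a:ℂ) (b:ℂ)
      = ((Real.Gamma a * Real.Gamma b / Real.Gamma (a + b) : ℝ) : ℂ) := by
    have h := Complex.Gamma_mul_Gamma_eq_betaIntegral (s := (a:ℂ)) (t := (b:ℂ))
      (by simpa using ha) (by simpa using hb)
    rw [show ((a:ℂ) + b) = ((a + b : ℝ) : ℂ) by push_cast; ring] at h hG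
    have : Complex.betaIntegral (a:ℂ) (b:ℂ)
        = Complex.Gamma a * Complex.Gamma b / Complex.Gamma ((a + b : ℝ) : ℂ) := by
      rw [eq_div_iff hG, mul_comm (Complex.betaIntegral _ _), ← h]
    rw [this, Complex.Gamma_ofReal, Complex.Gamma_ofReal, Complex.Gamma_ofReal]
    push_cast
    ring
  rw [hbeta, show ((a:ℂ) + b - 1) = ((a + b - 1 : ℝ) : ℂ) by push_cast; ring,
    ← Complex.ofReal_cpow hS.le, ← Complex.ofReal_mul] at hc
  exact_mod_cast hc

lemma gauss_point {n : ℕ} (a b : ℝ) (ha : 0 < a) (hb : 0 < b)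
    (x ξ : EuclideanSpace ℝ (Fin n)) :
    rexp (-a * ‖x - ξ‖ ^ 2) * rexp (-b * ‖ξ‖ ^ 2)
      = rexp (-(a * b / (a + b)) * ‖x‖ ^ 2)
        * rexp (-(a + b) * ‖ξ - (a / (a + b)) • x‖ ^ 2) := by
  rw [← Real.exp_add, ← Real.exp_add]
  congr 1
  have hab : a + b ≠ 0 := by positivity
  have h1 : ‖x - ξ‖ ^ 2 = ‖x‖ ^ 2 - 2 * inner ℝ x ξ + ‖ξ‖ ^ 2 := norm_sub_sq_real x ξ
  have h2 : ‖ξ - (a / (a + b)) • x‖ ^ 2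
      = ‖ξ‖ ^ 2 - 2 * (a / (a + b) * inner ℝ x ξ) + (a / (a + b)) ^ 2 * ‖x‖ ^ 2 := by
    rw [norm_sub_sq_real, real_inner_smul_right, norm_smul, real_inner_comm]
    rw [mul_pow, Real.norm_eq_abs, sq_abs]
  rw [h1, h2]
  field_simp
  ring

lemma gauss_integrable0 {n : ℕ} {k : ℝ} (hk : 0 < k) :
    Integrable (fun ξ : EuclideanSpace ℝ (Fin n) => rexp (-k * ‖ξ‖ ^ 2)) := by
  have h := (GaussianFourier.integrable_cexp_neg_mul_sq_norm_add
    (V := EuclideanSpace ℝ (Fin n)) (b := ((k : ℝ) : ℂ))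
    (by simpa using hk) 0 0).norm
  have e : ∀ ξ : EuclideanSpace ℝ (Fin n),
      ‖Complex.exp (-((k : ℝ) : ℂ) * (‖ξ‖ : ℂ) ^ 2 +
        0 * (inner ℝ (0 : EuclideanSpace ℝ (Fin n)) ξ : ℝ))‖ = rexp (-k * ‖ξ‖ ^ 2) := by
    intro ξ
    rw [Complex.norm_exp]
    congr 1
    rw [zero_mul, add_zero,
      show (-((k : ℝ) : ℂ) * (‖ξ‖ : ℂ) ^ 2 : ℂ) = ((-k * ‖ξ‖ ^ 2 : ℝ) : ℂ) by push_cast; ring,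
      Complex.ofReal_re]
  exact h.congr (Filter.Eventually.of_forall e)

lemma gauss_integrable {n : ℕ} (a b : ℝ) (ha : 0 < a) (hb : 0 < b)
    (x : EuclideanSpace ℝ (Fin n)) :
    Integrable (fun ξ : EuclideanSpace ℝ (Fin n) =>
      rexp (-a * ‖x - ξ‖ ^ 2) * rexp (-b * ‖ξ‖ ^ 2)) := by
  simp_rw [gauss_point a b ha hb x]
  apply Integrable.const_mul
  exact (gauss_integrable0 (by positivity)).comp_sub_right _

lemma gauss_conv {n : ℕ} (a b : ℝ) (ha : 0 < a) (hb : 0 < b)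
    (x : EuclideanSpace ℝ (Fin n)) :
    ∫ ξ : EuclideanSpace ℝ (Fin n), rexp (-a * ‖x - ξ‖ ^ 2) * rexp (-b * ‖ξ‖ ^ 2)
      = (π / (a + b)) ^ ((n : ℝ) / 2) * rexp (-(a * b / (a + b)) * ‖x‖ ^ 2) := by
  simp_rw [gauss_point a b ha hb x]
  rw [MeasureTheory.integral_const_mul]
  rw [MeasureTheory.integral_sub_right_eq_self
    (fun ξ : EuclideanSpace ℝ (Fin n) => rexp (-(a + b) * ‖ξ‖ ^ 2)) ((a / (a + b)) • x)]
  rw [GaussianFourier.integral_rexp_neg_mul_sq_norm (by positivity), finrank_euclideanSpace_fin]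
  ring

lemma measurable_Phi (n : ℕ) (γ : ℝ) :
    Measurable (fun p : EuclideanSpace ℝ (Fin n) × ℝ => Phi n γ p.1 p.2) := by
  have heq : (fun p : EuclideanSpace ℝ (Fin n) × ℝ => Phi n γ p.1 p.2)
      = fun p => if 0 < p.2 then
          (rexp (Real.log p.2 * (γ - 1)) / Real.Gamma γ) *
            rexp (Real.log (4 * Real.pi * p.2) * (-(n : ℝ) / 2)) *
            rexp (-‖p.1‖ ^ 2 / (4 * p.2)) else 0 := by
    funext p
    unfold Phi
    by_cases h : 0 < p.2
    · rw [if_pos h, if_pos h, Real.rpow_def_of_pos h, Real.rpow_def_of_pos (by positivity)]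
    · rw [if_neg h, if_neg h]
  rw [heq]
  apply Measurable.ite (measurableSet_lt measurable_const measurable_snd)
  · apply Measurable.mul
    · apply Measurable.mul
      · exact ((Real.measurable_log.comp measurable_snd).mul_const _).exp.div_const _
      · exact ((Real.measurable_log.comp
          (measurable_const.mul measurable_snd)).mul_const _).exp
    · exact (((measurable_fst.norm.pow measurable_const).neg).div
        (measurable_const.mul measurable_snd)).exp
  · exact measurable_const

lemma Phi_nonneg {n : ℕ} {γ : ℝ} (hΓ : 0 < Real.Gamma γ) (x : EuclideanSpace ℝ (Fin n))
    (t : ℝ) : 0 ≤ Phi n γ x t := by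
  unfold Phi
  split
  · positivity
  · exact le_rfl

lemma key_ineq {n : ℕ} {α lam β A : ℝ} (hα : 0 < α) (hlam : 1 < lam) (hβ : 0 < β)
    (hkey : (lam - 1) * β = (lam - 1) * ((n:ℝ)+2)/2 - lam * α)
    (hA : A = ((4 * Real.pi) ^ ((lam - 1) * (n : ℝ) / 2) * (Real.Gamma (α + β)) ^ lam /
        Real.Gamma β) ^ (1 / (lam - 1)))
    (x : EuclideanSpace ℝ (Fin n)) {s : ℝ} (hs : 0 < s) :
    (A * Phi n (α + β) x s) ^ lam ≤ A * Phi n β x s := by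
  have hlam0 : (0:ℝ) < lam - 1 := by linarith
  have hΓβ := Real.Gamma_pos_of_pos hβ
  have hΓαβ := Real.Gamma_pos_of_pos (by linarith : 0 < α + β)
  have hπ : (0:ℝ) < 4 * π := by positivity
  have hA0 : 0 < A := by rw [hA]; positivity
  have h4s : (0:ℝ) < 4 * π * s := by positivity
  rw [Phi, Phi, if_pos hs, if_pos hs]
  set w := ‖x‖ ^ 2 with hw
  have hw0 : 0 ≤ w := by positivity
  have hL : 0 < A * (s ^ (α + β - 1) / Real.Gamma (α + β) * (4 * π * s) ^ (-(n:ℝ)/2)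
      * rexp (-w / (4 * s))) := by positivity
  have hR : 0 < A * (s ^ (β - 1) / Real.Gamma β * (4 * π * s) ^ (-(n:ℝ)/2)
      * rexp (-w / (4 * s))) := by positivity
  rw [Real.rpow_def_of_pos hL, ← Real.exp_log hR]
  apply Real.exp_le_exp.2
  have hlogA : (lam - 1) * Real.log A
      = (lam - 1) * (n:ℝ)/2 * Real.log (4*π) + lam * Real.log (Real.Gamma (α+β))
        - Real.log (Real.Gamma β) := by
    rw [hA, Real.log_rpow (by positivity), Real.log_div (by positivity) hΓβ.ne',
      Real.log_mul (by positivity) (by positivity), Real.log_rpow hπ, Real.log_rpow hΓαβ]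
    field_simp
  have expand : ∀ γ : ℝ, 0 < Real.Gamma γ →
      Real.log (A * (s ^ (γ - 1) / Real.Gamma γ * (4 * π * s) ^ (-(n:ℝ)/2)
        * rexp (-w / (4 * s))))
      = Real.log A + ((γ - 1) * Real.log s - Real.log (Real.Gamma γ))
        + (-(n:ℝ)/2) * (Real.log (4*π) + Real.log s) + (-w / (4 * s)) := by
    intro γ hΓγ
    rw [Real.log_mul hA0.ne' (by positivity), Real.log_mul (by positivity) (Real.exp_pos _).ne',
      Real.log_mul (by positivity) (by positivity), Real.log_div (by positivity) hΓγ.ne',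
      Real.log_rpow hs, Real.log_rpow h4s, Real.log_exp, Real.log_mul hπ.ne' hs.ne']
    ring
  rw [expand (α + β) hΓαβ, expand β hΓβ]
  have hd : (Real.log A + ((α + β - 1) * Real.log s - Real.log (Real.Gamma (α + β)))
        + (-(n:ℝ)/2) * (Real.log (4*π) + Real.log s) + (-w / (4 * s))) * lam
      - (Real.log A + ((β - 1) * Real.log s - Real.log (Real.Gamma β))
        + (-(n:ℝ)/2) * (Real.log (4*π) + Real.log s) + (-w / (4 * s)))
      = -((lam - 1) * (w / (4 * s))) := by
    linear_combination hlogA + Real.log s * hkey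
  have hnn : 0 ≤ (lam - 1) * (w / (4 * s)) :=
    mul_nonneg hlam0.le (div_nonneg hw0 (by positivity))
  linarith

lemma inner_eval {n : ℕ} {α β A : ℝ} (hα : 0 < α) (hβ : 0 < β) (hA : 0 ≤ A)
    {u v : ℝ} (hu : 0 < u) (hv : 0 < v) (x : EuclideanSpace ℝ (Fin n)) :
    (∫⁻ ξ, ENNReal.ofReal (Phi n α (x - ξ) u * (A * Phi n β ξ v)))
      = ENNReal.ofReal ((A / (Real.Gamma α * Real.Gamma β)) *
          ((4 * π * (u + v)) ^ (-(n:ℝ)/2) * rexp (-‖x‖ ^ 2 / (4 * (u + v)))) *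
          (u ^ (α - 1) * v ^ (β - 1))) := by
  have hΓα := Real.Gamma_pos_of_pos hα
  have hΓβ := Real.Gamma_pos_of_pos hβ
  set a : ℝ := 1 / (4 * u) with ha
  set b : ℝ := 1 / (4 * v) with hb
  have ha0 : 0 < a := by rw [ha]; positivity
  have hb0 : 0 < b := by rw [hb]; positivity
  set C0 : ℝ := A * ((u ^ (α - 1) / Real.Gamma α) * (4 * π * u) ^ (-(n:ℝ)/2))
      * ((v ^ (β - 1) / Real.Gamma β) * (4 * π * v) ^ (-(n:ℝ)/2)) with hC0
  have hC0nn : 0 ≤ C0 := by rw [hC0]; positivity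
  have hpt : ∀ ξ, Phi n α (x - ξ) u * (A * Phi n β ξ v)
      = C0 * (rexp (-a * ‖x - ξ‖ ^ 2) * rexp (-b * ‖ξ‖ ^ 2)) := by
    intro ξ
    rw [Phi, Phi, if_pos hu, if_pos hv,
      show -‖x - ξ‖ ^ 2 / (4 * u) = -a * ‖x - ξ‖ ^ 2 by rw [ha]; field_simp,
      show -‖ξ‖ ^ 2 / (4 * v) = -b * ‖ξ‖ ^ 2 by rw [hb]; field_simp, hC0]
    ring
  simp_rw [hpt, ENNReal.ofReal_mul hC0nn]
  rw [lintegral_const_mul' _ _ ENNReal.ofReal_ne_top,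
    ← ofReal_integral_eq_lintegral_ofReal (gauss_integrable a b ha0 hb0 x)
      (Filter.Eventually.of_forall fun ξ => mul_nonneg (Real.exp_nonneg _) (Real.exp_nonneg _)),
    gauss_conv a b ha0 hb0 x, ← ENNReal.ofReal_mul hC0nn]
  congr 1
  have huv : (0:ℝ) < u + v := by linarith
  have e0 : a * b / (a + b) = 1 / (4 * (u + v)) := by
    rw [ha, hb, div_add_div _ _ (by positivity) (by positivity)]
    field_simp
    ring
  have e1 : -(a * b / (a + b)) * ‖x‖ ^ 2 = -‖x‖ ^ 2 / (4 * (u + v)) := by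
    rw [e0]; ring
  have e2 : (4 * π * u) ^ (-(n:ℝ)/2) * (4 * π * v) ^ (-(n:ℝ)/2) * (π / (a + b)) ^ ((n:ℝ)/2)
      = (4 * π * (u + v)) ^ (-(n:ℝ)/2) := by
    rw [neg_div, Real.rpow_neg (by positivity), Real.rpow_neg (by positivity),
      Real.rpow_neg (by positivity), ← Real.inv_rpow (by positivity),
      ← Real.inv_rpow (by positivity), ← Real.inv_rpow (by positivity),
      ← Real.mul_rpow (by positivity) (by positivity),
      ← Real.mul_rpow (by positivity) (by positivity)]
    congr 1
    rw [ha, hb, div_add_div _ _ (by positivity) (by positivity)]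
    field_simp
    ring
  rw [hC0, e1]
  linear_combination (A / (Real.Gamma α * Real.Gamma β) * rexp (-‖x‖ ^ 2 / (4 * (u + v)))
    * (u ^ (α - 1) * v ^ (β - 1))) * e2

set_option maxHeartbeats 1000000 in
theorem super_problem_region_DE_solution (n : ℕ) (hn : 1 ≤ n) (α lam T : ℝ)
    (hlam : 1 < lam) (hα0 : 0 < α) (hα1 : α < ((n : ℝ) + 2) / 2 * (1 - 1 / lam))
    (hT : 0 < T) :
    0 < ((n : ℝ) + 2) / 2 - lam * α / (lam - 1) ∧
    ∀ β A : ℝ, β = ((n : ℝ) + 2) / 2 - lam * α / (lam - 1) →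
      A = ((4 * Real.pi) ^ ((lam - 1) * (n : ℝ) / 2) * (Real.Gamma (α + β)) ^ lam /
        Real.Gamma β) ^ (1 / (lam - 1)) →
      ∀ f : EuclideanSpace ℝ (Fin n) → ℝ → ℝ,
        (f = fun x t => if 0 ≤ t then A * Phi n β x (t + T) else 0) →
        (∀ p : ℝ, 1 ≤ p → MemXp n (ENNReal.ofReal p) f) ∧
        (∀ (x : EuclideanSpace ℝ (Fin n)) (t : ℝ),
          (J n α f x t) ^ lam ≤ ENNReal.ofReal (f x t)) ∧
        (∀ (x : EuclideanSpace ℝ (Fin n)) (t : ℝ), t < 0 → f x t = 0) ∧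
        ¬ (∀ᵐ q : EuclideanSpace ℝ (Fin n) × ℝ, f q.1 q.2 = 0) := by
  have hlam0 : (0:ℝ) < lam - 1 := by linarith
  have hlamp : (0:ℝ) < lam := by linarith
  have hβpos : 0 < ((n : ℝ) + 2) / 2 - lam * α / (lam - 1) := by
    rw [sub_pos, div_lt_iff₀ hlam0]
    have h : α < ((n:ℝ)+2)/2 * ((lam-1)/lam) := by
      rw [show ((n:ℝ)+2)/2 * ((lam-1)/lam) = ((n:ℝ)+2)/2 * (1 - 1/lam) by
        congr 1; field_simp]
      exact hα1
    calc lam * α < lam * (((n:ℝ)+2)/2 * ((lam-1)/lam)) := (mul_lt_mul_iff_right₀ hlamp).2 h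
    _ = ((n:ℝ)+2)/2*(lam-1) := by field_simp
  refine ⟨hβpos, ?_⟩
  intro β A hβ hA f hf
  have hβ0 : 0 < β := hβ ▸ hβpos
  have hαβ : 0 < α + β := by linarith
  have hΓβ := Real.Gamma_pos_of_pos hβ0
  have hΓα := Real.Gamma_pos_of_pos hα0
  have hΓαβ := Real.Gamma_pos_of_pos hαβ
  have hA0 : 0 < A := by rw [hA]; positivity
  have hkey : (lam - 1) * β = (lam - 1) * ((n:ℝ)+2)/2 - lam * α := by
    rw [hβ]; field_simp
  have hzero : ∀ (x : EuclideanSpace ℝ (Fin n)) (t : ℝ), t < 0 → f x t = 0 := by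
    intro x t ht; rw [hf]; simp [not_le.2 ht]
  refine ⟨?_, ?_, hzero, ?_⟩
  · -- MemXp
    intro p hp
    have hp0 : (0:ℝ) < p := by linarith
    constructor
    · rw [hf]
      exact Measurable.ite (measurableSet_le measurable_const measurable_snd)
        (measurable_const.mul ((measurable_Phi n β).comp
          (measurable_fst.prodMk (measurable_snd.add_const T))))
        measurable_const
    · intro T'
      set M : ℝ := max T' 0 with hM
      have hM0 : (0:ℝ) ≤ M := le_max_right _ _
      have hMT : (0:ℝ) < M + T := by linarith
      set c : ℝ := 1 / (4 * (M + T)) with hc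
      have hc0 : 0 < c := by rw [hc]; positivity
      set Cb : ℝ := A * ((T ^ (β-1) + (M+T) ^ (β-1)) / Real.Gamma β)
          * (4 * π * T) ^ (-(n:ℝ)/2) with hCb
      have hCb0 : 0 ≤ Cb := by
        rw [hCb]
        have h1 : (0:ℝ) ≤ T ^ (β-1) := Real.rpow_nonneg hT.le _
        have h2 : (0:ℝ) ≤ (M+T) ^ (β-1) := Real.rpow_nonneg hMT.le _
        positivity
      have hPne : (ENNReal.ofReal p) ≠ 0 := by
        simp only [ne_eq, ENNReal.ofReal_eq_zero, not_le]; linarith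
      rw [eLpNorm_eq_lintegral_rpow_enorm_toReal hPne ENNReal.ofReal_ne_top,
        ENNReal.toReal_ofReal hp0.le]
      set g1 : EuclideanSpace ℝ (Fin n) → ℝ≥0∞ :=
        fun x => ENNReal.ofReal ((Cb * rexp (-c * ‖x‖^2)) ^ p) with hg1
      set g2 : ℝ → ℝ≥0∞ := fun t => (Icc (0:ℝ) M).indicator (fun _ => 1) t with hg2
      have hg1m : Measurable g1 := by
        rw [hg1]
        have hcont : Continuous fun x : EuclideanSpace ℝ (Fin n) =>
            (Cb * rexp (-c * ‖x‖^2)) ^ p := by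
          apply Continuous.rpow_const
          · exact continuous_const.mul
              (Real.continuous_exp.comp (continuous_const.mul (continuous_norm.pow 2)))
          · exact fun x => Or.inr hp0.le
        exact hcont.measurable.ennreal_ofReal
      have hg2m : Measurable g2 := measurable_const.indicator measurableSet_Icc
      have hbound : ∀ q : EuclideanSpace ℝ (Fin n) × ℝ,
          q ∈ {q : EuclideanSpace ℝ (Fin n) × ℝ | q.2 < T'} →
          (↑‖Function.uncurry f q‖₊ : ℝ≥0∞) ^ p ≤ g1 q.1 * g2 q.2 := by
        rintro ⟨x, t⟩ hq
        simp only [mem_setOf_eq] at hq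
        by_cases ht0 : 0 ≤ t
        · have htM : t ∈ Icc 0 M := ⟨ht0, le_trans hq.le (le_max_left _ _)⟩
          rw [hg2]
          simp only []
          rw [indicator_of_mem htM, mul_one]
          have hft : Function.uncurry f (x, t) = A * Phi n β x (t + T) := by
            rw [hf]; simp [Function.uncurry, ht0]
          have htT : (0:ℝ) < t + T := by linarith
          have hfnn : 0 ≤ Function.uncurry f (x, t) := by
            rw [hft]; exact mul_nonneg hA0.le (Phi_nonneg hΓβ x (t + T))
          have hfb : Function.uncurry f (x, t) ≤ Cb * rexp (-c * ‖x‖^2) := by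
            rw [hft, Phi, if_pos htT]
            have h1 : (t+T) ^ (β-1) ≤ T ^ (β-1) + (M+T) ^ (β-1) := by
              rcases le_or_gt β 1 with hb1 | hb1
              · have h := Real.rpow_le_rpow_of_nonpos hT (by linarith : T ≤ t + T)
                  (by linarith : β - 1 ≤ 0)
                nlinarith [Real.rpow_nonneg hMT.le (β-1)]
              · have h := Real.rpow_le_rpow (by linarith : (0:ℝ) ≤ t + T)
                  (by linarith [htM.2] : t + T ≤ M + T) (by linarith : (0:ℝ) ≤ β - 1)
                nlinarith [Real.rpow_nonneg hT.le (β-1)]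
            have h2 : (4*π*(t+T)) ^ (-(n:ℝ)/2) ≤ (4*π*T) ^ (-(n:ℝ)/2) := by
              apply Real.rpow_le_rpow_of_nonpos (by positivity)
                (by nlinarith [Real.pi_pos] : 4*π*T ≤ 4*π*(t+T))
              rw [neg_div]
              exact neg_nonpos.mpr (by positivity)
            have h3 : rexp (-‖x‖^2/(4*(t+T))) ≤ rexp (-c * ‖x‖^2) := by
              apply Real.exp_le_exp.2
              rw [hc, show -(‖x‖^2)/(4*(t+T)) = -(‖x‖^2/(4*(t+T))) by ring,
                show -(1/(4*(M+T))) * ‖x‖^2 = -(‖x‖^2/(4*(M+T))) by ring]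
              apply neg_le_neg
              apply div_le_div_of_nonneg_left (by positivity) (by positivity)
              linarith [htM.2]
            have h123 : (t+T)^(β-1)/Real.Gamma β * (4*π*(t+T))^(-(n:ℝ)/2)
                  * rexp (-‖x‖^2/(4*(t+T)))
                ≤ (T ^ (β-1) + (M+T) ^ (β-1))/Real.Gamma β * (4*π*T)^(-(n:ℝ)/2)
                  * rexp (-c * ‖x‖^2) := by
              have hY1 : (0:ℝ) ≤ (T ^ (β-1) + (M+T) ^ (β-1))/Real.Gamma β := by
                have := Real.rpow_nonneg hT.le (β-1)
                have := Real.rpow_nonneg hMT.le (β-1)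
                positivity
              apply mul_le_mul _ h3 (Real.exp_nonneg _)
                (mul_nonneg hY1 (Real.rpow_nonneg (by positivity) _))
              apply mul_le_mul _ h2 (Real.rpow_nonneg (by positivity) _) hY1
              rw [div_eq_mul_inv, div_eq_mul_inv]
              exact mul_le_mul_of_nonneg_right h1 (inv_nonneg.2 hΓβ.le)
            calc A * ((t+T)^(β-1)/Real.Gamma β * (4*π*(t+T))^(-(n:ℝ)/2)
                  * rexp (-‖x‖^2/(4*(t+T))))
                ≤ A * ((T ^ (β-1) + (M+T) ^ (β-1))/Real.Gamma β * (4*π*T)^(-(n:ℝ)/2)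
                  * rexp (-c * ‖x‖^2)) := mul_le_mul_of_nonneg_left h123 hA0.le
              _ = Cb * rexp (-c * ‖x‖^2) := by rw [hCb]; ring
          rw [hg1]
          simp only []
          rw [← enorm_eq_nnnorm, Real.enorm_eq_ofReal hfnn,
            ENNReal.ofReal_rpow_of_nonneg hfnn hp0.le]
          exact ENNReal.ofReal_le_ofReal (Real.rpow_le_rpow hfnn hfb hp0.le)
        · have hft : Function.uncurry f (x, t) = 0 := by
            rw [hf]; simp [Function.uncurry, ht0]
          rw [hft]
          simp only [nnnorm_zero, ENNReal.coe_zero]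
          rw [ENNReal.zero_rpow_of_pos hp0]
          exact zero_le
      have hslab : MeasurableSet {q : EuclideanSpace ℝ (Fin n) × ℝ | q.2 < T'} :=
        measurableSet_lt measurable_snd measurable_const
      have hfin : (∫⁻ q in {q : EuclideanSpace ℝ (Fin n) × ℝ | q.2 < T'},
          (↑‖Function.uncurry f q‖₊ : ℝ≥0∞) ^ p) < ⊤ := by
        calc (∫⁻ q in {q : EuclideanSpace ℝ (Fin n) × ℝ | q.2 < T'},
              (↑‖Function.uncurry f q‖₊ : ℝ≥0∞) ^ p)
            ≤ ∫⁻ q in {q : EuclideanSpace ℝ (Fin n) × ℝ | q.2 < T'}, g1 q.1 * g2 q.2 :=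
              lintegral_mono_ae ((ae_restrict_iff' hslab).2
                (Filter.Eventually.of_forall hbound))
          _ ≤ ∫⁻ q : EuclideanSpace ℝ (Fin n) × ℝ, g1 q.1 * g2 q.2 :=
              setLIntegral_le_lintegral _ _
          _ = (∫⁻ x, g1 x) * (∫⁻ t, g2 t) := by
              rw [Measure.volume_eq_prod]
              exact lintegral_prod_mul hg1m.aemeasurable hg2m.aemeasurable
          _ < ⊤ := by
              apply ENNReal.mul_lt_top
              · have hInt : Integrable (fun x : EuclideanSpace ℝ (Fin n) =>
                    (Cb * rexp (-c * ‖x‖^2)) ^ p) := by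
                  have heq : (fun x : EuclideanSpace ℝ (Fin n) =>
                      (Cb * rexp (-c * ‖x‖^2)) ^ p)
                      = fun x => Cb ^ p * rexp (-(c*p) * ‖x‖^2) := by
                    funext x
                    rw [Real.mul_rpow hCb0 (Real.exp_nonneg _), ← Real.exp_mul,
                      show -c * ‖x‖^2 * p = -(c*p) * ‖x‖^2 by ring]
                  rw [heq]
                  exact (gauss_integrable0 (by positivity)).const_mul _
                rw [hg1, ← ofReal_integral_eq_lintegral_ofReal hInt
                  (Filter.Eventually.of_forall fun x =>
                    Real.rpow_nonneg (mul_nonneg hCb0 (Real.exp_nonneg _)) _)]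
                exact ENNReal.ofReal_lt_top
              · rw [hg2]
                simp only []
                rw [lintegral_indicator measurableSet_Icc, setLIntegral_one, Real.volume_Icc]
                exact ENNReal.ofReal_lt_top
      exact ENNReal.rpow_lt_top_of_nonneg (by positivity) hfin.ne
  · -- main inequality
    intro x t
    by_cases ht : 0 < t
    · set s := t + T with hs
      have hs0 : 0 < s := by rw [hs]; linarith
      set K : ℝ := A / (Real.Gamma α * Real.Gamma β) *
        ((4 * π * s) ^ (-(n:ℝ)/2) * rexp (-‖x‖ ^ 2 / (4 * s))) with hK
      have hK0 : 0 ≤ K := by rw [hK]; positivity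
      have hpoint : ∀ τ ∈ Iio t,
          (∫⁻ ξ, ENNReal.ofReal (Phi n α (x - ξ) (t - τ) * f ξ τ))
            = (Ico 0 t).indicator
                (fun τ => ENNReal.ofReal (K * ((t - τ) ^ (α-1) * (τ + T) ^ (β-1)))) τ := by
        intro τ hτ
        rw [mem_Iio] at hτ
        by_cases hτ0 : 0 ≤ τ
        · rw [indicator_of_mem (mem_Ico.mpr ⟨hτ0, hτ⟩)]
          have hfτ : ∀ ξ, f ξ τ = A * Phi n β ξ (τ + T) := by
            intro ξ; rw [hf]; simp [hτ0]
          simp_rw [hfτ]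
          rw [inner_eval hα0 hβ0 hA0.le (by linarith : (0:ℝ) < t - τ)
            (by linarith : (0:ℝ) < τ + T) x]
          rw [show t - τ + (τ + T) = s by rw [hs]; ring, hK]
        · rw [indicator_of_notMem (fun hmem => hτ0 hmem.1)]
          have hfτ : ∀ ξ, f ξ τ = 0 := by intro ξ; rw [hf]; simp [hτ0]
          simp [hfτ]
      have hstep1 : J n α f x t
          = ∫⁻ τ in Ico 0 t, ENNReal.ofReal (K * ((t - τ) ^ (α-1) * (τ + T) ^ (β-1))) := by
        unfold J
        rw [MeasureTheory.setLIntegral_congr_fun measurableSet_Iio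
          hpoint]
        rw [lintegral_indicator measurableSet_Ico,
          Measure.restrict_restrict measurableSet_Ico,
          inter_eq_self_of_subset_left Ico_subset_Iio_self]
      have hstep2 : (∫⁻ τ in Ico 0 t, ENNReal.ofReal (K * ((t - τ) ^ (α-1) * (τ + T) ^ (β-1))))
          ≤ ∫⁻ τ in Ioc (-T) t, ENNReal.ofReal (K * ((t - τ) ^ (α-1) * (τ + T) ^ (β-1))) :=
        lintegral_mono' (Measure.restrict_mono
          (fun τ hτ => mem_Ioc.mpr ⟨by linarith [(mem_Ico.1 hτ).1], (mem_Ico.1 hτ).2.le⟩)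
          le_rfl) le_rfl
      have h3 : IntervalIntegrable
          (fun τ => (t - τ) ^ (α-1) * (τ + T) ^ (β-1)) volume (-T) t := by
        have h2 := (betaII hβ0 hα0 hs0).comp_add_right T
        rw [show (0:ℝ) - T = -T by ring, show s - T = t by rw [hs]; ring] at h2
        have heq : (fun τ => (t - τ) ^ (α-1) * (τ + T) ^ (β-1))
            = fun τ => (τ + T) ^ (β-1) * (s - (τ + T)) ^ (α-1) := by
          funext τ; rw [show s - (τ + T) = t - τ by rw [hs]; ring]; ring
        rw [heq]; exact h2
      have hInt : IntegrableOn (fun τ => (t - τ) ^ (α-1) * (τ + T) ^ (β-1)) (Ioc (-T) t) :=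
        (intervalIntegrable_iff_integrableOn_Ioc_of_le (by linarith)).1 h3
      have hval : ∫ τ in Ioc (-T) t, (t - τ) ^ (α-1) * (τ + T) ^ (β-1)
          = s ^ (α+β-1) * (Real.Gamma α * Real.Gamma β / Real.Gamma (α+β)) := by
        rw [← intervalIntegral.integral_of_le (by linarith : -T ≤ t)]
        have heq : ∀ τ ∈ uIcc (-T) t, (t - τ) ^ (α-1) * (τ + T) ^ (β-1)
            = (fun σ => σ ^ (β-1) * (s - σ) ^ (α-1)) (τ + T) := by
          intro τ _
          simp only []
          rw [show s - (τ + T) = t - τ by rw [hs]; ring]; ring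
        rw [intervalIntegral.integral_congr heq,
          intervalIntegral.integral_comp_add_right (fun σ => σ ^ (β-1) * (s - σ) ^ (α-1)) T,
          show -T + T = (0:ℝ) by ring, show t + T = s from hs.symm,
          betaVal hβ0 hα0 hs0, show β + α - 1 = α + β - 1 by ring,
          show β + α = α + β by ring]
        ring
      have hstep3 : (∫⁻ τ in Ioc (-T) t, ENNReal.ofReal (K * ((t - τ) ^ (α-1) * (τ + T) ^ (β-1))))
          = ENNReal.ofReal (K * (s ^ (α+β-1)
              * (Real.Gamma α * Real.Gamma β / Real.Gamma (α+β)))) := by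
        simp_rw [ENNReal.ofReal_mul hK0]
        rw [lintegral_const_mul' _ _ ENNReal.ofReal_ne_top,
          ← ofReal_integral_eq_lintegral_ofReal hInt
            ((ae_restrict_iff' measurableSet_Ioc).2 (Filter.Eventually.of_forall fun τ hτ =>
              mul_nonneg (Real.rpow_nonneg (by linarith [hτ.2]) _)
                (Real.rpow_nonneg (by linarith [hτ.1]) _))),
          hval]
      have hJle : J n α f x t ≤ ENNReal.ofReal (A * Phi n (α+β) x s) := by
        rw [hstep1]
        refine hstep2.trans ?_
        rw [hstep3]
        apply ENNReal.ofReal_le_ofReal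
        apply le_of_eq
        rw [Phi, if_pos hs0, hK]
        field_simp
      calc (J n α f x t) ^ lam
          ≤ (ENNReal.ofReal (A * Phi n (α+β) x s)) ^ lam :=
            ENNReal.rpow_le_rpow hJle (by linarith)
        _ = ENNReal.ofReal ((A * Phi n (α+β) x s) ^ lam) :=
            ENNReal.ofReal_rpow_of_nonneg
              (mul_nonneg hA0.le (Phi_nonneg hΓαβ x s)) (by linarith)
        _ ≤ ENNReal.ofReal (A * Phi n β x s) :=
            ENNReal.ofReal_le_ofReal (key_ineq hα0 hlam hβ0 hkey hA x hs0)
        _ = ENNReal.ofReal (f x t) := by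
            rw [hf]; simp only [if_pos (le_of_lt ht), hs]
    · -- t ≤ 0 : J = 0
      have hJ : J n α f x t = 0 := by
        unfold J
        rw [MeasureTheory.setLIntegral_congr_fun measurableSet_Iio
          (fun τ hτ => ?_), lintegral_zero]
        have hfτ : ∀ ξ, f ξ τ = 0 := fun ξ => hzero ξ τ (by
          rw [mem_Iio] at hτ; push_neg at ht; linarith)
        simp [hfτ]
      rw [hJ, ENNReal.zero_rpow_of_pos (by linarith)]
      exact zero_le
  · -- not a.e. zero
    intro hae
    have h0 : volume {q : EuclideanSpace ℝ (Fin n) × ℝ | ¬ f q.1 q.2 = 0} = 0 := by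
      simpa [ae_iff] using hae
    have hsub : (univ ×ˢ Icc (0:ℝ) 1 : Set (EuclideanSpace ℝ (Fin n) × ℝ))
        ⊆ {q | ¬ f q.1 q.2 = 0} := by
      rintro ⟨x, t⟩ ⟨-, ht⟩
      simp only [mem_setOf_eq]
      rw [hf]
      simp only [if_pos ht.1]
      have hpos : 0 < A * Phi n β x (t + T) := by
        rw [Phi, if_pos (by linarith [ht.1] : (0:ℝ) < t + T)]
        exact mul_pos hA0 (mul_pos (mul_pos
          (div_pos (Real.rpow_pos_of_pos (by linarith [ht.1]) _) hΓβ)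
          (Real.rpow_pos_of_pos (mul_pos (by positivity : (0:ℝ) < 4 * π)
            (by linarith [ht.1] : (0:ℝ) < t + T)) _)) (Real.exp_pos _))
      exact hpos.ne'
    have hle := (measure_mono hsub).trans_eq h0
    have hball : 0 < volume (univ : Set (EuclideanSpace ℝ (Fin n))) :=
      lt_of_lt_of_le (Metric.measure_ball_pos volume 0 one_pos)
        (measure_mono (subset_univ _))
    have hpos : (0:ℝ≥0∞)
        < volume (univ ×ˢ Icc (0:ℝ) 1 : Set (EuclideanSpace ℝ (Fin n) × ℝ)) := by
      rw [Measure.volume_eq_prod, Measure.prod_prod, Real.volume_Icc]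
      refine ENNReal.mul_pos hball.ne' ?_
      simp
    exact (hpos.trans_le hle).false
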